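/- Every scale-time solver whose update rule is a linear combination x̄_{r_{i+1}} = Σ_{j=0}^{i} ā_{ij} x̄_{r_j} + Σ_{j=0}^{i} b̄_{ij} ū_{r_j}(x̄_{r_j}) of transformed iterates and transformed velocities is a non-stationary solver in the original variables: there exist coefficients a_{ij}, b_{ij} such that x_{t_{i+1}} = Σ_{j=0}^{i} a_{ij} x_{t_j} + Σ_{j=0}^{i} b_{ij} u_{t_j}(x_{t_j}), with a_{ij} = (ā_{ij} s_j + b̄_{ij} ṡ_j)/s_{i+1} and b_{ij} = b̄_{ij} ṫ_j s_j / s_{i+1}. -/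
import Mathlib


/-- Scale-Time ⊆ Non-Stationary: a scale-time update rule in the barred variables
`x̄_{r_{i+1}} = Σ_j ā_{ij} x̄_{r_j} + Σ_j b̄_{ij} ū_{r_j}(x̄_{r_j})` yields a non-stationary
update rule in the original variables with coefficients
`a_{ij} = (ā_{ij} s_j + b̄_{ij} ṡ_j)/s_{i+1}` and `b_{ij} = b̄_{ij} ṫ_j s_j / s_{i+1}`. -/
theorem scale_time_subset_non_stationary {d : ℕ}
    (u : ℝ → (Fin d → ℝ) → (Fin d → ℝ)) (x : ℝ → (Fin d → ℝ))
    (s t s' t' : ℝ → ℝ) (hspos : ∀ ρ, 0 < s ρ)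
    (r : ℕ → ℝ) (i : ℕ) (abar bbar : Fin (i + 1) → ℝ)
    (hupd : s (r (i + 1)) • x (t (r (i + 1)))
      = ∑ j : Fin (i + 1), abar j • (s (r j) • x (t (r j)))
        + ∑ j : Fin (i + 1), bbar j •
            ((s' (r j) / s (r j)) • (s (r j) • x (t (r j)))
              + (t' (r j) * s (r j)) • u (t (r j)) ((s (r j))⁻¹ • (s (r j) • x (t (r j)))))) :
    x (t (r (i + 1)))
      = ∑ j : Fin (i + 1),
          ((abar j * s (r j) + bbar j * s' (r j)) / s (r (i + 1))) • x (t (r j))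
        + ∑ j : Fin (i + 1),
          (bbar j * t' (r j) * s (r j) / s (r (i + 1))) • u (t (r j)) (x (t (r j))) := by

  have hsne : ∀ ρ, s ρ ≠ 0 := fun ρ => (hspos ρ).ne'
  have h := congrArg (fun v => (s (r (i + 1)))⁻¹ • v) hupd
  have hc : ∀ j : Fin (i + 1), ((s (r (j : ℕ)))⁻¹ * s (r (j : ℕ))) = 1 :=
    fun j => inv_mul_cancel₀ (hsne _)
  have hd : ∀ j : Fin (i + 1), s' (r (j : ℕ)) / s (r (j : ℕ)) * s (r (j : ℕ)) = s' (r (j : ℕ)) :=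
    fun j => div_mul_cancel₀ _ (hsne _)
  simp only [smul_smul, hc, hd, inv_mul_cancel₀ (hsne (r (i + 1))), one_smul, smul_add,
    Finset.smul_sum] at h
  rw [h, Finset.sum_add_distrib, ← add_assoc, ← Finset.sum_add_distrib]
  congr 1
  · refine Finset.sum_congr rfl fun j _ => ?_
    rw [← add_smul]
    congr 1
    rw [div_eq_inv_mul]
    ring
  · refine Finset.sum_congr rfl fun j _ => ?_
    congr 1
    rw [div_eq_inv_mul]
    ring
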